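/- Let D > 0 be real and let s ∈ ℂ with Re(s) > 0. Let u : ℝ → (EuclideanSpace ℝ (Fin 2) → ℂ) and fix a point x. Assume: (i) for every t ≥ 0 the map t ↦ u t x has derivative D • Δ(u t)(x) at t (the heat equation holds at x); (ii) there is a constant C such that ‖u t x‖ ≤ C and ‖Δ(u t)(x)‖ ≤ C for all t ≥ 0, and the maps t ↦ u t x and t ↦ Δ(u t)(x) are continuous on [0,∞); (iii) the Laplacian commutes with the transform integral at x, i.e. Δ(û)(x) = ∫_{t ∈ (0,∞)} exp(−s·t) · Δ(u t)(x) dt, where û(y) := ∫_{t ∈ (0,∞)} exp(−s·t) · u t y dt. Then the Laplace transform satisfies the modified Helmholtz equation at x: D • Δ(û)(x) − s · û(x) = − u 0 x. -/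

import Mathlib

open MeasureTheory Set

/-- The Laplacian of a function on `EuclideanSpace ℝ (Fin 2)`, as the sum of the
second derivatives along the standard orthonormal basis directions (matching Mathlib's
definition of the Laplacian on a Euclidean space). -/
noncomputable def laplacian (f : EuclideanSpace ℝ (Fin 2) → ℂ)
    (x : EuclideanSpace ℝ (Fin 2)) : ℂ :=
  ∑ i : Fin 2, iteratedFDeriv ℝ 2 f x ![EuclideanSpace.single i 1, EuclideanSpace.single i 1]

/-- If `u` solves the planar heat equation `∂u/∂t = D Δu` at the point `x`, with
uniformly bounded and continuous data on `[0,∞)`, and the Laplacian commutes with the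
Laplace transform integral at `x`, then the Laplace transform
`û(y) = ∫_{t ∈ (0,∞)} e^{-st} u t y dt` satisfies the modified Helmholtz equation
`D Δû − s û = −u₀` at `x`. -/
theorem heat_laplace_transform_modified_helmholtz
    (D : ℝ) (hD : 0 < D) (s : ℂ) (hs : 0 < s.re)
    (u : ℝ → EuclideanSpace ℝ (Fin 2) → ℂ) (x : EuclideanSpace ℝ (Fin 2))
    (hheat : ∀ t : ℝ, 0 ≤ t → HasDerivAt (fun τ => u τ x) (D • laplacian (u t) x) t)
    (C : ℝ)
    (hbound : ∀ t : ℝ, 0 ≤ t → ‖u t x‖ ≤ C ∧ ‖laplacian (u t) x‖ ≤ C)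
    (hcont : ContinuousOn (fun t => u t x) (Set.Ici 0))
    (hcont' : ContinuousOn (fun t => laplacian (u t) x) (Set.Ici 0))
    (hcomm :
      laplacian (fun y => ∫ t in Ioi (0:ℝ), Complex.exp (-(s * t)) * u t y) x
        = ∫ t in Ioi (0:ℝ), Complex.exp (-(s * t)) * laplacian (u t) x) :
    D • laplacian (fun y => ∫ t in Ioi (0:ℝ), Complex.exp (-(s * t)) * u t y) x
      - s * (∫ t in Ioi (0:ℝ), Complex.exp (-(s * t)) * u t x) = -(u 0 x) := by
  have hC : 0 ≤ C := le_trans (norm_nonneg _) ((hbound 0 le_rfl).1)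
  -- integrability of e^{-st} * v t for bounded continuous v
  have key : ∀ v : ℝ → ℂ, (∀ t : ℝ, 0 ≤ t → ‖v t‖ ≤ C) → ContinuousOn v (Ici 0) →
      IntegrableOn (fun t : ℝ => Complex.exp (-(s*t)) * v t) (Ioi (0:ℝ)) := by
    intro v hb hc
    have hmeas : AEStronglyMeasurable (fun t : ℝ => Complex.exp (-(s*t)) * v t)
        (volume.restrict (Ioi (0:ℝ))) := by
      apply ContinuousOn.aestronglyMeasurable ?_ measurableSet_Ioi
      exact (Continuous.continuousOn (by continuity)).mul (hc.mono Ioi_subset_Ici_self)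
    apply Integrable.mono' ((exp_neg_integrableOn_Ioi 0 hs).const_mul C) hmeas
    filter_upwards [ae_restrict_mem measurableSet_Ioi] with t ht
    have hnorm : ‖Complex.exp (-(s*t))‖ = Real.exp (-s.re * t) := by
      rw [Complex.norm_exp]
      simp [Complex.mul_re, neg_mul]
    rw [norm_mul, hnorm, mul_comm (C : ℝ)]
    exact mul_le_mul_of_nonneg_left (hb t (le_of_lt ht)) (Real.exp_pos _).le
  have int1 : IntegrableOn (fun t : ℝ => Complex.exp (-(s*t)) * u t x) (Ioi (0:ℝ)) :=
    key _ (fun t ht => (hbound t ht).1) hcont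
  have int2 : IntegrableOn (fun t : ℝ => Complex.exp (-(s*t)) * laplacian (u t) x) (Ioi (0:ℝ)) :=
    key _ (fun t ht => (hbound t ht).2) hcont'
  set g : ℝ → ℂ := fun t : ℝ => Complex.exp (-(s*t)) * u t x with hgdef
  set g' : ℝ → ℂ := fun t : ℝ =>
    Complex.exp (-(s*t)) * (D • laplacian (u t) x) - s * (Complex.exp (-(s*t)) * u t x)
    with hg'def
  have hg' : ∀ t : ℝ, 0 ≤ t → HasDerivAt g (g' t) t := by
    intro t ht
    have h0 : HasDerivAt (fun τ : ℝ => -(s * (τ:ℂ))) (-s) t := by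
      simpa only [mul_one, id_eq, Pi.neg_apply] using (((hasDerivAt_id (t:ℂ)).const_mul s).neg).comp_ofReal
    have h1 : HasDerivAt (fun τ : ℝ => Complex.exp (-(s*τ)))
        (Complex.exp (-(s*t)) * (-s)) t := h0.cexp
    have h2 := h1.mul (hheat t ht)
    refine h2.congr_deriv ?_
    rw [hg'def]
    beta_reduce
    ring
  -- integrability of g'
  have intg' : IntegrableOn g' (Ioi (0:ℝ)) := by
    have h1 : IntegrableOn
        (fun t : ℝ => Complex.exp (-(s*t)) * (D • laplacian (u t) x)) (Ioi (0:ℝ)) := by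
      apply IntegrableOn.congr_fun (int2.const_mul (D:ℂ)) ?_ measurableSet_Ioi
      intro t _
      simp only [Complex.real_smul]
      ring
    exact h1.sub (int1.const_mul s)
  -- tendsto g → 0 at ∞
  have htend : Filter.Tendsto g Filter.atTop (nhds 0) := by
    apply squeeze_zero_norm' (a := fun t : ℝ => C * Real.exp (-(s.re * t)))
    · filter_upwards [Filter.eventually_ge_atTop (0:ℝ)] with t ht
      have hnorm : ‖Complex.exp (-(s*t))‖ = Real.exp (-(s.re * t)) := by
        rw [Complex.norm_exp]
        simp [Complex.mul_re]
      rw [hgdef]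
      simp only [norm_mul, hnorm, mul_comm (C : ℝ)]
      exact mul_le_mul_of_nonneg_left ((hbound t ht).1) (Real.exp_pos _).le
    · have h1 : Filter.Tendsto (fun t : ℝ => -(s.re * t)) Filter.atTop Filter.atBot := by
        apply Filter.tendsto_neg_atBot_iff.mpr
        exact Filter.Tendsto.const_mul_atTop hs Filter.tendsto_id
      have := Real.tendsto_exp_atBot.comp h1
      simpa using this.const_mul C
  -- fundamental theorem
  have hFTC : ∫ t in Ioi (0:ℝ), g' t = 0 - g 0 := by
    apply integral_Ioi_of_hasDerivAt_of_tendsto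
    · exact (hg' 0 le_rfl).continuousAt.continuousWithinAt
    · intro t ht
      exact hg' t (le_of_lt ht)
    · exact intg'
    · exact htend
  have hg0 : g 0 = u 0 x := by simp [hgdef]
  have hsplit : ∫ t in Ioi (0:ℝ), g' t
      = (D:ℂ) * (∫ t in Ioi (0:ℝ), Complex.exp (-(s*t)) * laplacian (u t) x)
        - s * ∫ t in Ioi (0:ℝ), Complex.exp (-(s*t)) * u t x := by
    rw [hg'def]
    rw [integral_sub ?_ (int1.const_mul s)]
    · congr 1
      · rw [← integral_const_mul]
        apply setIntegral_congr_fun measurableSet_Ioi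
        intro t _
        simp only [Complex.real_smul]
        ring
      · rw [integral_const_mul]
    · apply IntegrableOn.congr_fun (int2.const_mul (D:ℂ)) ?_ measurableSet_Ioi
      intro t _
      simp only [Complex.real_smul]
      ring
  rw [hcomm]
  rw [hg0] at hFTC
  rw [hsplit] at hFTC
  rw [zero_sub] at hFTC
  calc D • (∫ t in Ioi (0:ℝ), Complex.exp (-(s * t)) * laplacian (u t) x)
        - s * ∫ t in Ioi (0:ℝ), Complex.exp (-(s * t)) * u t x
      = (D:ℂ) * (∫ t in Ioi (0:ℝ), Complex.exp (-(s*t)) * laplacian (u t) x)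
        - s * ∫ t in Ioi (0:ℝ), Complex.exp (-(s*t)) * u t x := by
        rw [Complex.real_smul]
    _ = -(u 0 x) := hFTC
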